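/- Let G_1,…,G_s be pairwise non-isomorphic finite groups and a_1,…,a_s ∈ ℤ. If for every finite group A one has Σ_i a_i·|Hom(A,G_i)/G_i| = 0, where Hom(A,G_i)/G_i denotes the set of conjugacy classes of homomorphisms A → G_i under the conjugation action of G_i, then all a_i = 0. -/

import Mathlib

/-- The conjugation-orbit equivalence on `Hom(A,G)`: `f ~ g` iff `g` is a
conjugate of `f` by some element of `G`. -/
def conjSetoid (A G : Type*) [Group A] [Group G] : Setoid (A →* G) where
  r f g := ∃ c : G, ∀ x : A, c * f x * c⁻¹ = g x
  iseqv := by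
    refine ⟨fun f => ⟨1, by simp⟩, ?_, ?_⟩
    · rintro f g ⟨c, hc⟩
      exact ⟨c⁻¹, fun x => by rw [← hc x]; group⟩
    · rintro f g h ⟨c, hc⟩ ⟨d, hd⟩
      exact ⟨d * c, fun x => by rw [← hd x, ← hc x]; group⟩

section Aux

instance finiteMonoidHom (A G : Type*) [Group A] [Group G] [Finite A] [Finite G] :
    Finite (A →* G) :=
  Finite.of_injective (fun f => (f : A → G)) DFunLike.coe_injective

/-- The conjugation setoid restricted to homs with kernel `N`. -/
def kerSetoid (A G : Type*) [Group A] [Group G] (N : Subgroup A) :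
    Setoid {f : A →* G // f.ker = N} :=
  (conjSetoid A G).comap Subtype.val

/-- Number of conjugacy classes of injective (kernel `⊥`) homs. -/
noncomputable def injCard (A G : Type*) [Group A] [Group G] : ℕ :=
  Nat.card (Quotient (kerSetoid A G ⊥))

variable {A G : Type*} [Group A] [Group G]

lemma ker_eq_of_conj {f g : A →* G} (h : (conjSetoid A G) f g) : f.ker = g.ker := by
  obtain ⟨c, hc⟩ := h
  ext x
  simp only [MonoidHom.mem_ker, ← hc x]
  constructor
  · intro hx; rw [hx]; group
  · intro hx
    have : f x = c⁻¹ * 1 * c := by rw [← hx]; group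
    simpa using this

/-- Map from the sigma of kernel-fibered quotients to the full quotient. -/
noncomputable def fromSigma :
    (Σ N : Subgroup A, Quotient (kerSetoid A G N)) → Quotient (conjSetoid A G) :=
  fun p => Quotient.liftOn p.2 (fun f => Quotient.mk _ f.1)
    (fun _ _ hfg => Quotient.sound ((Setoid.comap_rel _ _ _ _).mp hfg))

lemma fromSigma_bijective :
    Function.Bijective (fromSigma (A := A) (G := G)) := by
  constructor
  · rintro ⟨N, q⟩ ⟨N', q'⟩ hq
    induction q using Quotient.ind with
    | _ f =>
      induction q' using Quotient.ind with
      | _ f' =>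
        have hrel : (conjSetoid A G) f.1 f'.1 := Quotient.exact hq
        have hN : N = N' := by rw [← f.2, ← f'.2]; exact ker_eq_of_conj hrel
        subst hN
        have : Quotient.mk (kerSetoid A G N) f = Quotient.mk (kerSetoid A G N) f' :=
          Quotient.sound ((Setoid.comap_rel _ _ _ _).mpr hrel)
        simp [this]
  · intro q
    induction q using Quotient.ind with
    | _ f => exact ⟨⟨f.ker, Quotient.mk _ ⟨f, rfl⟩⟩, rfl⟩

lemma card_quotient_eq_sum [Finite A] [Finite G] [Fintype (Subgroup A)] :
    Nat.card (Quotient (conjSetoid A G)) =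
      ∑ N : Subgroup A, Nat.card (Quotient (kerSetoid A G N)) := by
  classical
  rw [← Nat.card_eq_of_bijective _ (fromSigma_bijective (A := A) (G := G))]
  letI : ∀ N : Subgroup A, Fintype (Quotient (kerSetoid A G N)) := fun N => Fintype.ofFinite _
  rw [Nat.card_eq_fintype_card, Fintype.card_sigma]
  exact Finset.sum_congr rfl fun N _ => (Nat.card_eq_fintype_card).symm

/-- For normal `N`, classes of homs with kernel `N` correspond to classes of
injective homs from the quotient. -/
noncomputable def kerQuotEquiv (N : Subgroup A) [N.Normal] :
    Quotient (kerSetoid A G N) ≃ Quotient (kerSetoid (A ⧸ N) G ⊥) := by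
  refine Quotient.congr ?_ ?_
  · refine
      { toFun := fun f => ⟨QuotientGroup.lift N f.1
          (fun x hx => MonoidHom.mem_ker.mp (by rw [f.2]; exact hx)), ?_⟩
        invFun := fun g => ⟨(g.1).comp (QuotientGroup.mk' N), ?_⟩
        left_inv := ?_
        right_inv := ?_ }
    · -- kernel of the lift is ⊥
      obtain ⟨f, hf⟩ := f
      subst hf
      ext y
      refine QuotientGroup.induction_on y (fun x => ?_)
      simp only [MonoidHom.mem_ker, QuotientGroup.lift_mk', Subgroup.mem_bot]
      rw [QuotientGroup.eq_one_iff]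
      exact MonoidHom.mem_ker.symm
    · -- kernel of composition is N
      ext x
      simp only [MonoidHom.mem_ker, MonoidHom.comp_apply, QuotientGroup.mk'_apply]
      rw [← MonoidHom.mem_ker, g.2, Subgroup.mem_bot, QuotientGroup.eq_one_iff]
    · intro f
      ext x
      rfl
    · intro g
      apply Subtype.ext
      apply MonoidHom.ext
      intro y
      refine QuotientGroup.induction_on y (fun x => ?_)
      rfl
  · intro f f'
    simp only [Setoid.comap_rel, Equiv.coe_fn_mk]
    constructor
    · rintro ⟨c, hc⟩
      refine ⟨c, fun y => ?_⟩
      refine QuotientGroup.induction_on y (fun x => ?_)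
      exact hc x
    · rintro ⟨c, hc⟩
      exact ⟨c, fun x => hc (QuotientGroup.mk x)⟩

lemma card_ker_eq_injCard (N : Subgroup A) [N.Normal] :
    Nat.card (Quotient (kerSetoid A G N)) = injCard (A ⧸ N) G :=
  Nat.card_congr (kerQuotEquiv N)

lemma card_ker_not_normal (N : Subgroup A) (hN : ¬ N.Normal) :
    Nat.card (Quotient (kerSetoid A G N)) = 0 := by
  have : IsEmpty {f : A →* G // f.ker = N} := by
    constructor
    rintro ⟨f, hf⟩
    exact hN (hf ▸ f.normal_ker)
  simp [Nat.card_of_isEmpty]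

lemma injCard_eq_zero_of_card_lt {A G : Type*} [Group A] [Group G] [Finite A] [Finite G]
    (h : Nat.card G < Nat.card A) : injCard A G = 0 := by
  have : IsEmpty {f : A →* G // f.ker = ⊥} := by
    constructor
    rintro ⟨f, hf⟩
    have hinj : Function.Injective f := (MonoidHom.ker_eq_bot_iff f).mp hf
    exact absurd (Nat.card_le_card_of_injective f hinj) (not_le.mpr h)
  simp [injCard, Nat.card_of_isEmpty]

lemma injCard_pos_self (A : Type*) [Group A] [Finite A] : 0 < injCard A A := by
  have h1 : Nonempty {f : A →* A // f.ker = ⊥} :=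
    ⟨⟨MonoidHom.id A, by ext x; simp [MonoidHom.mem_ker]⟩⟩
  haveI : Nonempty (Quotient (kerSetoid A A ⊥)) := Nonempty.map (Quotient.mk _) h1
  exact Nat.card_pos

lemma mulEquiv_of_injCard_ne_zero {A G : Type*} [Group A] [Group G] [Finite A] [Finite G]
    (hcard : Nat.card A = Nat.card G) (h : injCard A G ≠ 0) : Nonempty (A ≃* G) := by
  have hne : Nonempty (Quotient (kerSetoid A G ⊥)) := by
    by_contra hc
    exact h (by simp [injCard, Nat.card_of_isEmpty,
      not_nonempty_iff.mp hc])
  obtain ⟨q⟩ := hne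
  induction q using Quotient.ind with
  | _ f =>
    have hinj : Function.Injective f.1 := (MonoidHom.ker_eq_bot_iff _).mp f.2
    have hbij : Function.Bijective f.1 :=
      (Nat.bijective_iff_injective_and_card f.1).mpr ⟨hinj, hcard⟩
    exact ⟨MulEquiv.ofBijective f.1 hbij⟩

end Aux

/-- If `G_1, …, G_s` are pairwise non-isomorphic finite groups and
`Σ_i a_i·|Hom(A,G_i)/G_i| = 0` for every finite group `A` (orbits under the
conjugation action), then all `a_i = 0`. -/
theorem coeffs_vanish_of_conj_classes_vanish {s : ℕ}
    (G : Fin s → Type) [∀ i, Group (G i)] [∀ i, Finite (G i)]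
    (hpairwise : ∀ i j, i ≠ j → ¬Nonempty (G i ≃* G j))
    (a : Fin s → ℤ)
    (h : ∀ (A : Type) [Group A] [Finite A],
      ∑ i, a i * (Nat.card (Quotient (conjSetoid A (G i))) : ℤ) = 0) :
    ∀ i, a i = 0 := by
  classical
  -- Step 1: the corresponding sums over injective classes vanish for all A.
  have key : ∀ (n : ℕ) (A : Type) [Group A] [Finite A], Nat.card A ≤ n →
      ∑ i, a i * (injCard A (G i) : ℤ) = 0 := by
    intro n
    induction n with
    | zero =>
      intro A _ _ hA
      have := Nat.card_pos (α := A); omega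
    | succ n ih =>
      intro A _ _ hA
      have : Fintype (Subgroup A) := Fintype.ofFinite _
      have hsum : ∑ N : Subgroup A,
          (∑ i, a i * (Nat.card (Quotient (kerSetoid A (G i) N)) : ℤ)) = 0 := by
        rw [Finset.sum_comm]
        calc ∑ i, ∑ N : Subgroup A, a i * (Nat.card (Quotient (kerSetoid A (G i) N)) : ℤ)
            = ∑ i, a i * (Nat.card (Quotient (conjSetoid A (G i))) : ℤ) := by
              refine Finset.sum_congr rfl fun i _ => ?_
              rw [← Finset.mul_sum, card_quotient_eq_sum]
              push_cast
              ring
          _ = 0 := h A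
      -- every term with N ≠ ⊥ vanishes
      have hterm : ∀ N : Subgroup A, N ≠ ⊥ →
          (∑ i, a i * (Nat.card (Quotient (kerSetoid A (G i) N)) : ℤ)) = 0 := by
        intro N hN
        by_cases hnorm : N.Normal
        · have hlt : Nat.card (A ⧸ N) ≤ n := by
            have hcard := Subgroup.card_eq_card_quotient_mul_card_subgroup N
            have h2 : 2 ≤ Nat.card N := (Subgroup.one_lt_card_iff_ne_bot N).mpr hN
            have hq : 0 < Nat.card (A ⧸ N) := Nat.card_pos
            have : Nat.card (A ⧸ N) * 2 ≤ Nat.card A := by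
              rw [hcard]; exact Nat.mul_le_mul_left _ h2
            omega
          have := ih (A ⧸ N) hlt
          calc (∑ i, a i * (Nat.card (Quotient (kerSetoid A (G i) N)) : ℤ))
              = ∑ i, a i * (injCard (A ⧸ N) (G i) : ℤ) := by
                refine Finset.sum_congr rfl fun i _ => ?_
                rw [card_ker_eq_injCard]
            _ = 0 := this
        · refine Finset.sum_eq_zero fun i _ => ?_
          rw [card_ker_not_normal _ hnorm]
          simp
      -- hence the ⊥ term vanishes, which is the claim
      have hbot : (∑ i, a i * (Nat.card (Quotient (kerSetoid A (G i) (⊥ : Subgroup A))) : ℤ)) = 0 := by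
        have := Finset.add_sum_erase Finset.univ
          (fun N : Subgroup A => ∑ i, a i * (Nat.card (Quotient (kerSetoid A (G i) N)) : ℤ))
          (Finset.mem_univ (⊥ : Subgroup A))
        rw [← this] at hsum
        have hrest : ∑ N ∈ Finset.univ.erase (⊥ : Subgroup A),
            (∑ i, a i * (Nat.card (Quotient (kerSetoid A (G i) N)) : ℤ)) = 0 :=
          Finset.sum_eq_zero fun N hNmem =>
            hterm N (Finset.ne_of_mem_erase hNmem)
        rw [hrest] at hsum
        simpa using hsum
      simpa [injCard] using hbot
  have key' : ∀ (A : Type) [Group A] [Finite A],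
      ∑ i, a i * (injCard A (G i) : ℤ) = 0 := fun A _ _ => key (Nat.card A) A le_rfl
  -- Step 2: downward induction on the cardinality of G i.
  set B : ℕ := Finset.univ.sup (fun j => Nat.card (G j)) with hB
  have hle : ∀ j, Nat.card (G j) ≤ B := fun j =>
    Finset.le_sup (f := fun j => Nat.card (G j)) (Finset.mem_univ j)
  have main : ∀ m : ℕ, ∀ i, B - Nat.card (G i) = m → a i = 0 := by
    intro m
    induction m using Nat.strong_induction_on with
    | _ m ih =>
      intro i him
      have hGi := key' (G i)
      -- analyse the terms
      have hterms : ∀ j, j ≠ i → a j * (injCard (G i) (G j) : ℤ) = 0 := by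
        intro j hj
        rcases lt_trichotomy (Nat.card (G j)) (Nat.card (G i)) with hlt | heq | hgt
        · rw [injCard_eq_zero_of_card_lt hlt]; simp
        · have : injCard (G i) (G j) = 0 := by
            by_contra hc
            exact hpairwise i j (Ne.symm hj) (mulEquiv_of_injCard_ne_zero heq.symm hc)
          rw [this]; simp
        · have hjm : B - Nat.card (G j) < m := by
            have h1 := hle j
            have h2 : 0 < Nat.card (G i) := Nat.card_pos
            omega
          rw [ih _ hjm j rfl]; simp
      have : ∑ j, a j * (injCard (G i) (G j) : ℤ) = a i * (injCard (G i) (G i) : ℤ) := by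
        rw [Finset.sum_eq_single i]
        · exact fun j _ hj => hterms j hj
        · exact fun hi => absurd (Finset.mem_univ i) hi
      rw [this] at hGi
      have hpos : (0 : ℤ) < (injCard (G i) (G i) : ℤ) := by
        exact_mod_cast injCard_pos_self (G i)
      exact (mul_eq_zero.mp hGi).resolve_right (ne_of_gt hpos)
  exact fun i => main (B - Nat.card (G i)) i rfl
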